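/- Let K be a field complete for a nonarchimedean norm and let 0 < α ≤ β. Let x = Σ_{i∈ℤ} aᵢ tⁱ be a nonzero element of the ring of Laurent series convergent on the open annulus α < |t| < β (i.e., |aᵢ|ηⁱ → 0 as i → ±∞ for every η ∈ (α,β)). For r ∈ (−log β, −log α), set |x|_{e^{−r}} = sup_i |aᵢ| e^{−ri}. If the function r ↦ log|x|_{e^{−r}} is affine on (−log β, −log α), then x is a unit in this ring. -/

import Mathlib

open Filter

/-- A two-sided sequence of coefficients gives a Laurent series convergent on the
open annulus `α < |t| < β`: `|aᵢ| ηⁱ → 0` as `i → ±∞` for every `η ∈ (α, β)`. -/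
def ConvergesOnOpenAnnulus {K : Type*} [NormedField K] (α β : ℝ) (a : ℤ → K) : Prop :=
  ∀ η ∈ Set.Ioo α β, Tendsto (fun i : ℤ => ‖a i‖ * η ^ i) (cocompact ℤ) (nhds 0)

/-- The product of two Laurent series (convolution of coefficients). -/
noncomputable def laurentMul {K : Type*} [NormedField K] (a b : ℤ → K) : ℤ → K :=
  fun i => ∑' j : ℤ, a j * b (i - j)

/-- The `η`-Gauss norm `|x|_η = sup_i |aᵢ| ηⁱ` of a Laurent series. -/
noncomputable def gaussNormZ {K : Type*} [NormedField K] (a : ℤ → K) (η : ℝ) : ℝ :=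
  ⨆ i : ℤ, ‖a i‖ * η ^ i

/-- Lemma (`L:criterion-unit-1`): let `K` be a complete nonarchimedean field,
`0 < α < β`, and `x = Σ aᵢ tⁱ` a nonzero Laurent series convergent on the open
annulus `α < |t| < β`.  If `r ↦ log |x|_{e^{−r}}` is affine on
`(−log β, −log α)`, then `x` is a unit in `K{{α/t, t/β}}`. -/
lemma LU_bddAbove {f : ℤ → ℝ} (hf : Tendsto f cofinite (nhds 0)) :
    BddAbove (Set.range f) := by
  have h : {i : ℤ | ¬ f i < 1}.Finite := by
    exact Filter.eventually_cofinite.mp (hf.eventually_lt_const one_pos)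
  have hsub : Set.range f ⊆ (f '' {i | ¬ f i < 1}) ∪ Set.Iio 1 := by
    rintro _ ⟨i, rfl⟩
    by_cases hi : f i < 1
    · exact Or.inr hi
    · exact Or.inl ⟨i, hi, rfl⟩
  exact ((h.image f).bddAbove.union bddAbove_Iio).mono hsub

lemma LU_exists_max {f : ℤ → ℝ} (hf : Tendsto f cofinite (nhds 0)) {i₀ : ℤ}
    (h0 : 0 < f i₀) : ∃ n, 0 < f n ∧ ∀ i, f i ≤ f n := by
  have h : {i : ℤ | ¬ f i < f i₀}.Finite := by
    exact Filter.eventually_cofinite.mp (hf.eventually_lt_const h0)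
  have hmem : i₀ ∈ h.toFinset := by simp
  obtain ⟨n, hn, hmax⟩ := h.toFinset.exists_max_image f ⟨i₀, hmem⟩
  refine ⟨n, lt_of_lt_of_le h0 (hmax i₀ hmem), fun i => ?_⟩
  by_cases hi : i ∈ h.toFinset
  · exact hmax i hi
  · simp only [Set.Finite.mem_toFinset, Set.mem_setOf_eq, not_not] at hi
    exact hi.le.trans (hmax i₀ hmem)

lemma LU_ciSup_lt_one {f : ℤ → ℝ} (hf : Tendsto f cofinite (nhds 0))
    (hnn : ∀ i, 0 ≤ f i) (hlt : ∀ i, f i < 1) : (⨆ i, f i) < 1 := by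
  by_cases hpos : ∃ i, 0 < f i
  · obtain ⟨i₀, hi₀⟩ := hpos
    obtain ⟨n, _, hmax⟩ := LU_exists_max hf hi₀
    exact lt_of_le_of_lt (ciSup_le hmax) (hlt n)
  · push_neg at hpos
    have : ∀ i, f i ≤ 0 := hpos
    exact lt_of_le_of_lt (ciSup_le this) one_pos

lemma LU_tendsto_zpow_atTop {q : ℝ} (h0 : 0 ≤ q) (h1 : q < 1) :
    Tendsto (fun i : ℤ => q ^ i) atTop (nhds 0) := by
  have ht : Tendsto Int.toNat atTop atTop :=
    tendsto_atTop_atTop.2 (fun b => ⟨(b : ℤ), fun i hi => by omega⟩)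
  have := (tendsto_pow_atTop_nhds_zero_of_lt_one h0 h1).comp ht
  apply this.congr'
  filter_upwards [eventually_ge_atTop (0 : ℤ)] with i hi
  simp only [Function.comp_apply]
  rw [← zpow_natCast, Int.toNat_of_nonneg hi]

lemma LU_tendsto_zpow_atBot {p : ℝ} (hp : 1 < p) :
    Tendsto (fun i : ℤ => p ^ i) atBot (nhds 0) := by
  have h0 : (0:ℝ) ≤ p⁻¹ := inv_nonneg.2 (by linarith)
  have h1 : p⁻¹ < 1 := inv_lt_one_of_one_lt₀ hp
  have := (LU_tendsto_zpow_atTop h0 h1).comp tendsto_neg_atBot_atTop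
  refine this.congr fun i => ?_
  simp [zpow_neg]





lemma LU_dominant {K : Type*} [NormedField K]
    (α β : ℝ) (hα : 0 < α) (hαβ : α < β)
    (a : ℤ → K) (ha : ConvergesOnOpenAnnulus α β a) (hne : a ≠ 0)
    (haff : ∃ m c : ℝ, ∀ r ∈ Set.Ioo (-Real.log β) (-Real.log α),
        Real.log (gaussNormZ a (Real.exp (-r))) = m * r + c) :
    ∃ n : ℤ, a n ≠ 0 ∧ ∀ η ∈ Set.Ioo α β, ∀ i, i ≠ n →
      ‖a i‖ * η ^ i < ‖a n‖ * η ^ n := by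
  have hβ : 0 < β := hα.trans hαβ
  have hI : -Real.log β < -Real.log α := by
    have := Real.log_lt_log hα hαβ; linarith
  set L := -Real.log β with hL
  set U := -Real.log α with hU
  have exp_mem : ∀ r ∈ Set.Ioo L U, Real.exp (-r) ∈ Set.Ioo α β := by
    rintro r ⟨h1, h2⟩
    constructor
    · have h : Real.log α < -r := by rw [hU] at h2; linarith
      calc α = Real.exp (Real.log α) := (Real.exp_log hα).symm
        _ < Real.exp (-r) := Real.exp_lt_exp.2 h
    · have h : -r < Real.log β := by rw [hL] at h1; linarith
      calc Real.exp (-r) < Real.exp (Real.log β) := Real.exp_lt_exp.2 h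
        _ = β := Real.exp_log hβ
  have log_mem : ∀ η ∈ Set.Ioo α β, -Real.log η ∈ Set.Ioo L U ∧
      Real.exp (-(-Real.log η)) = η := by
    rintro η ⟨h1, h2⟩
    have hηpos : 0 < η := hα.trans h1
    refine ⟨⟨?_, ?_⟩, by rw [neg_neg, Real.exp_log hηpos]⟩
    · rw [hL]; have := Real.log_lt_log hηpos h2; linarith
    · rw [hU]; have := Real.log_lt_log hα h1; linarith
  have hten : ∀ η ∈ Set.Ioo α β,
      Tendsto (fun i : ℤ => ‖a i‖ * η ^ i) cofinite (nhds 0) := by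
    intro η hη
    have h := ha η hη
    rwa [cocompact_eq_cofinite] at h
  set r₀ := (L + U) / 2 with hr₀def
  have hr₀ : r₀ ∈ Set.Ioo L U := ⟨by rw [hr₀def]; linarith, by rw [hr₀def]; linarith⟩
  set η₀ := Real.exp (-r₀) with hη₀def
  have hη₀ : η₀ ∈ Set.Ioo α β := exp_mem r₀ hr₀
  have hη₀pos : 0 < η₀ := hα.trans hη₀.1
  have hex : ∃ i, a i ≠ 0 := by
    by_contra h; push_neg at h; exact hne (funext fun i => h i)
  obtain ⟨i₀, hi₀⟩ := hex
  have hpos : 0 < ‖a i₀‖ * η₀ ^ i₀ :=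
    mul_pos (norm_pos_iff.2 hi₀) (zpow_pos hη₀pos i₀)
  obtain ⟨n, hn_pos, hnmax⟩ := LU_exists_max (hten η₀ hη₀) hpos
  have han : a n ≠ 0 := by
    intro h; rw [h] at hn_pos; simp at hn_pos
  have hanpos : 0 < ‖a n‖ := norm_pos_iff.2 han
  have hle : ∀ η ∈ Set.Ioo α β, ∀ i, ‖a i‖ * η ^ i ≤ gaussNormZ a η := by
    intro η hη i
    exact le_ciSup (LU_bddAbove (hten η hη)) i
  have hG₀ : gaussNormZ a η₀ = ‖a n‖ * η₀ ^ n :=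
    le_antisymm (ciSup_le hnmax) (hle η₀ hη₀ n)
  obtain ⟨m, c, hmc⟩ := haff
  have hlog_term : ∀ r : ℝ, Real.log (‖a n‖ * Real.exp (-r) ^ n)
      = Real.log ‖a n‖ - n * r := by
    intro r
    rw [Real.log_mul hanpos.ne' (zpow_pos (Real.exp_pos _) n).ne',
      Real.log_zpow, Real.log_exp]
    ring
  have key : ∀ r ∈ Set.Ioo L U, Real.log ‖a n‖ - n * r ≤ m * r + c := by
    intro r hr
    rw [← hmc r hr, ← hlog_term r]
    refine Real.log_le_log (mul_pos hanpos (zpow_pos (Real.exp_pos _) n)) ?_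
    exact hle _ (exp_mem r hr) n
  have keyeq : Real.log ‖a n‖ - n * r₀ = m * r₀ + c := by
    have h1 := hmc r₀ hr₀
    rw [← hη₀def, hG₀, hη₀def, hlog_term r₀] at h1
    exact h1
  have keyeq' : Real.log ‖a n‖ - n * ((L + U) / 2) = m * ((L + U) / 2) + c := by
    rw [← hr₀def]; exact keyeq
  have hr₁ : (3*L+U)/4 ∈ Set.Ioo L U := ⟨by linarith, by linarith⟩
  have hr₂ : (L+3*U)/4 ∈ Set.Ioo L U := ⟨by linarith, by linarith⟩
  have e1 : 0 ≤ (m + n) * (L - U) := by nlinarith [key _ hr₁, keyeq']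
  have e2 : 0 ≤ (m + n) * (U - L) := by nlinarith [key _ hr₂, keyeq']
  have hA : m + (n : ℝ) = 0 := by
    have h1 : m + (n:ℝ) ≤ 0 := by nlinarith [e1, hI]
    have h2 : 0 ≤ m + (n:ℝ) := by nlinarith [e2, hI]
    linarith
  have hm : m = -(n : ℝ) := by linarith
  have hc : c = Real.log ‖a n‖ := by
    rw [hm] at keyeq'; linarith [keyeq']
  have hGeq : ∀ η ∈ Set.Ioo α β, gaussNormZ a η = ‖a n‖ * η ^ n := by
    intro η hη
    have hηpos : 0 < η := hα.trans hη.1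
    obtain ⟨hr, hexp⟩ := log_mem η hη
    have h1 := hmc _ hr
    rw [hexp] at h1
    have htpos : 0 < ‖a n‖ * η ^ n := mul_pos hanpos (zpow_pos hηpos n)
    have hGpos : 0 < gaussNormZ a η := lt_of_lt_of_le htpos (hle η hη n)
    have h2 : Real.log (‖a n‖ * η ^ n) = m * (-Real.log η) + c := by
      rw [Real.log_mul hanpos.ne' (zpow_pos hηpos n).ne', Real.log_zpow, hm, hc]
      ring
    calc gaussNormZ a η = Real.exp (Real.log (gaussNormZ a η)) :=
          (Real.exp_log hGpos).symm
      _ = Real.exp (Real.log (‖a n‖ * η ^ n)) := by rw [h1, h2]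
      _ = ‖a n‖ * η ^ n := Real.exp_log htpos
  have hdom : ∀ η ∈ Set.Ioo α β, ∀ i, ‖a i‖ * η ^ i ≤ ‖a n‖ * η ^ n := by
    intro η hη i
    have := hle η hη i
    rwa [hGeq η hη] at this
  refine ⟨n, han, ?_⟩
  intro η hη i hi
  have hηpos : 0 < η := hα.trans hη.1
  have hpos' : 0 < ‖a n‖ * η ^ n := mul_pos hanpos (zpow_pos hηpos n)
  rcases hi.lt_or_gt with hlt | hlt
  · -- i < n : compare with smaller radius
    set η₂ := (α + η)/2 with hη₂def
    have hη₂pos : 0 < η₂ := by rw [hη₂def]; linarith [hη.1]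
    have hη₂ : η₂ ∈ Set.Ioo α β := ⟨by rw [hη₂def]; linarith [hη.1],
      by rw [hη₂def]; linarith [hη.1, hη.2]⟩
    have hη₂lt : η₂ < η := by rw [hη₂def]; linarith [hη.1]
    set q := η / η₂ with hqdef
    have hqpos : 0 < q := div_pos hηpos hη₂pos
    have hq1 : 1 < q := (one_lt_div hη₂pos).2 hη₂lt
    have hfact : η = η₂ * q := by rw [hqdef]; field_simp
    have hstep : ‖a i‖ * η ^ i ≤ (‖a n‖ * η₂ ^ n) * q ^ i := by
      calc ‖a i‖ * η ^ i = (‖a i‖ * η₂ ^ i) * q ^ i := by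
            rw [hfact, mul_zpow]; ring
        _ ≤ (‖a n‖ * η₂ ^ n) * q ^ i :=
            mul_le_mul_of_nonneg_right (hdom η₂ hη₂ i) (zpow_pos hqpos i).le
    have hqn : q ^ n * q ^ (i - n) = q ^ i := by
      rw [← zpow_add₀ hqpos.ne']; congr 1; ring
    have hfin : (‖a n‖ * η₂ ^ n) * q ^ i = (‖a n‖ * η ^ n) * q ^ (i - n) := by
      rw [hfact, mul_zpow, ← hqn]; ring
    have hlt1 : q ^ (i - n) < 1 := zpow_lt_one_of_neg₀ hq1 (by omega)
    calc ‖a i‖ * η ^ i ≤ (‖a n‖ * η ^ n) * q ^ (i - n) := by rw [← hfin]; exact hstep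
      _ < (‖a n‖ * η ^ n) * 1 := mul_lt_mul_of_pos_left hlt1 hpos'
      _ = ‖a n‖ * η ^ n := mul_one _
  · -- n < i : compare with larger radius
    set η₂ := (η + β)/2 with hη₂def
    have hη₂pos : 0 < η₂ := by rw [hη₂def]; linarith [hη.2]
    have hη₂ : η₂ ∈ Set.Ioo α β := ⟨by rw [hη₂def]; linarith [hη.1, hη.2],
      by rw [hη₂def]; linarith [hη.2]⟩
    have hη₂gt : η < η₂ := by rw [hη₂def]; linarith [hη.2]
    set q := η / η₂ with hqdef
    have hqpos : 0 < q := div_pos hηpos hη₂pos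
    have hq1 : q < 1 := (div_lt_one hη₂pos).2 hη₂gt
    have hfact : η = η₂ * q := by rw [hqdef]; field_simp
    have hstep : ‖a i‖ * η ^ i ≤ (‖a n‖ * η₂ ^ n) * q ^ i := by
      calc ‖a i‖ * η ^ i = (‖a i‖ * η₂ ^ i) * q ^ i := by
            rw [hfact, mul_zpow]; ring
        _ ≤ (‖a n‖ * η₂ ^ n) * q ^ i :=
            mul_le_mul_of_nonneg_right (hdom η₂ hη₂ i) (zpow_pos hqpos i).le
    have hqn : q ^ n * q ^ (i - n) = q ^ i := by
      rw [← zpow_add₀ hqpos.ne']; congr 1; ring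
    have hfin : (‖a n‖ * η₂ ^ n) * q ^ i = (‖a n‖ * η ^ n) * q ^ (i - n) := by
      rw [hfact, mul_zpow, ← hqn]; ring
    have hlt1 : q ^ (i - n) < 1 := zpow_lt_one₀ hqpos hq1 (by omega)
    calc ‖a i‖ * η ^ i ≤ (‖a n‖ * η ^ n) * q ^ (i - n) := by rw [← hfin]; exact hstep
      _ < (‖a n‖ * η ^ n) * 1 := mul_lt_mul_of_pos_left hlt1 hpos'
      _ = ‖a n‖ * η ^ n := mul_one _





lemma LU_shift {v η C : ℝ} {j : ℤ} (hη : 0 < η) (h : v * η ^ j ≤ C) :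
    v ≤ C * η ^ (-j) := by
  have h2 := mul_le_mul_of_nonneg_right h (zpow_pos hη (-j)).le
  rwa [mul_assoc, ← zpow_add₀ hη.ne', add_neg_cancel, zpow_zero, mul_one] at h2

lemma LU_summable_conv {K : Type*} [NormedField K] [CompleteSpace K]
    [IsUltrametricDist K] {f g : ℤ → K} {η D : ℝ} (hη : 0 < η)
    (hf : Tendsto (fun j : ℤ => ‖f j‖ * η ^ j) cofinite (nhds 0))
    (hg : ∀ i, ‖g i‖ * η ^ i ≤ D) (i : ℤ) :
    Summable (fun j => f j * g (i - j)) := by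
  apply NonarchimedeanAddGroup.summable_of_tendsto_cofinite_zero
  rw [tendsto_zero_iff_norm_tendsto_zero]
  apply squeeze_zero (g := fun j => (‖f j‖ * η ^ j) * (D * η ^ (-i)))
    (fun j => norm_nonneg _)
  · intro j
    have h1 : ‖g (i - j)‖ ≤ D * η ^ (-(i - j)) := LU_shift hη (hg (i - j))
    calc ‖f j * g (i - j)‖ = ‖f j‖ * ‖g (i - j)‖ := norm_mul _ _
      _ ≤ ‖f j‖ * (D * η ^ (-(i - j))) := by
          exact mul_le_mul_of_nonneg_left h1 (norm_nonneg _)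
      _ = (‖f j‖ * η ^ j) * (D * η ^ (-i)) := by
          rw [show -(i - j) = j + (-i) by ring, zpow_add₀ hη.ne']; ring
  · simpa using hf.mul_const (D * η ^ (-i))

lemma LU_norm_laurentMul_le {K : Type*} [NormedField K] [IsUltrametricDist K]
    {f g : ℤ → K} {η C D : ℝ} (hη : 0 < η) (hC : 0 ≤ C) (hD : 0 ≤ D)
    (hf : ∀ j, ‖f j‖ * η ^ j ≤ C) (hg : ∀ j, ‖g j‖ * η ^ j ≤ D) (i : ℤ) :
    ‖laurentMul f g i‖ * η ^ i ≤ C * D := by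
  have hbound : ∀ j, ‖f j * g (i - j)‖ ≤ C * D * η ^ (-i) := by
    intro j
    have h1 : ‖f j‖ ≤ C * η ^ (-j) := LU_shift hη (hf j)
    have h2 : ‖g (i - j)‖ ≤ D * η ^ (-(i - j)) := LU_shift hη (hg (i - j))
    calc ‖f j * g (i - j)‖ = ‖f j‖ * ‖g (i - j)‖ := norm_mul _ _
      _ ≤ (C * η ^ (-j)) * (D * η ^ (-(i - j))) :=
          mul_le_mul h1 h2 (norm_nonneg _) (by positivity)
      _ = C * D * η ^ (-i) := by
          rw [show (-i : ℤ) = -j + -(i - j) by ring, zpow_add₀ hη.ne']; ring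
  have h := IsUltrametricDist.norm_tsum_le_of_forall_le_of_nonneg
    (by positivity) hbound
  calc ‖laurentMul f g i‖ * η ^ i ≤ (C * D * η ^ (-i)) * η ^ i :=
        mul_le_mul_of_nonneg_right h (zpow_pos hη i).le
    _ = C * D := by
        rw [mul_assoc, ← zpow_add₀ hη.ne', neg_add_cancel, zpow_zero, mul_one]

noncomputable def convPow {K : Type*} [NormedField K] (w : ℤ → K) : ℕ → ℤ → K
  | 0 => fun i => if i = 0 then 1 else 0
  | (k + 1) => laurentMul w (convPow w k)

lemma LU_convPow_le {K : Type*} [NormedField K] [IsUltrametricDist K]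
    {w : ℤ → K} {η C : ℝ} (hη : 0 < η) (hC : 0 ≤ C)
    (hw : ∀ j, ‖w j‖ * η ^ j ≤ C) :
    ∀ k i, ‖convPow w k i‖ * η ^ i ≤ C ^ k := by
  intro k
  induction k with
  | zero =>
    intro i
    by_cases hi : i = 0
    · subst hi; simp [convPow]
    · simp [convPow, hi, zpow_pos hη i]
  | succ k ih =>
    intro i
    have h := LU_norm_laurentMul_le hη hC (pow_nonneg hC k) hw ih i
    calc ‖convPow w (k+1) i‖ * η ^ i ≤ C * C ^ k := h
      _ = C ^ (k + 1) := (pow_succ' C k).symm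

lemma LU_ratio (x η : ℝ) (i : ℤ) : x ^ (-i) * η ^ i = (η / x) ^ i := by
  rw [div_zpow, zpow_neg, div_eq_mul_inv]; exact mul_comm _ _

theorem laurent_unit_of_affine_gaussNorm
    (K : Type*) [NormedField K] [CompleteSpace K] [IsUltrametricDist K]
    (α β : ℝ) (hα : 0 < α) (hαβ : α < β)
    (a : ℤ → K) (ha : ConvergesOnOpenAnnulus α β a) (hne : a ≠ 0)
    (haff : ∃ m c : ℝ, ∀ r ∈ Set.Ioo (-Real.log β) (-Real.log α),
        Real.log (gaussNormZ a (Real.exp (-r))) = m * r + c) :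
    ∃ b : ℤ → K, ConvergesOnOpenAnnulus α β b ∧
      laurentMul a b = fun i => if i = 0 then (1 : K) else 0 := by
  obtain ⟨n, han, hdom⟩ := LU_dominant α β hα hαβ a ha hne haff
  have hβ : 0 < β := hα.trans hαβ
  have hanpos : 0 < ‖a n‖ := norm_pos_iff.2 han
  have hten : ∀ η ∈ Set.Ioo α β,
      Tendsto (fun i : ℤ => ‖a i‖ * η ^ i) cofinite (nhds 0) := by
    intro η hη
    have h := ha η hη
    rwa [cocompact_eq_cofinite] at h
  -- normalized series d and its "error part" w
  set d : ℤ → K := fun j => (a n)⁻¹ * a (j + n) with hd_def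
  set w : ℤ → K := fun j => (if j = 0 then (1 : K) else 0) - d j with hw_def
  have hd0 : d 0 = 1 := by
    rw [hd_def]; simp [inv_mul_cancel₀ han]
  have hw0 : w 0 = 0 := by rw [hw_def]; simp [hd0]
  have hdw : ∀ j, d j = (if j = 0 then (1 : K) else 0) - w j := by
    intro j; rw [hw_def]; ring
  -- norms of w are < 1 on the annulus
  have hdnorm : ∀ j, ‖d j‖ = ‖a n‖⁻¹ * ‖a (j + n)‖ := by
    intro j; rw [hd_def]; simp [norm_mul, norm_inv]
  have hwd : ∀ j, ‖w j‖ ≤ ‖d j‖ := by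
    intro j
    by_cases hj : j = 0
    · subst hj; rw [hw0]; simp
    · have : w j = -d j := by rw [hw_def]; simp [hj]
      rw [this, norm_neg]
  have hwnorm : ∀ η ∈ Set.Ioo α β, ∀ j, ‖w j‖ * η ^ j < 1 := by
    intro η hη j
    have hηpos : 0 < η := hα.trans hη.1
    by_cases hj : j = 0
    · subst hj; rw [hw0]; simp
    · have hwj : ‖w j‖ = ‖a n‖⁻¹ * ‖a (j + n)‖ := by
        have h1 : w j = -d j := by rw [hw_def]; simp [hj]
        rw [h1, norm_neg, hdnorm]
      have hjn : j + n ≠ n := by omega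
      have hlt := hdom η hη (j + n) hjn
      have hsplit : η ^ (j + n) = η ^ j * η ^ n := zpow_add₀ hηpos.ne' j n
      rw [hwj]
      have key : ‖a (j + n)‖ * η ^ j < ‖a n‖ := by
        by_contra hcon
        push_neg at hcon
        have : ‖a n‖ * η ^ n ≤ ‖a (j + n)‖ * η ^ (j + n) := by
          rw [hsplit]
          calc ‖a n‖ * η ^ n ≤ (‖a (j + n)‖ * η ^ j) * η ^ n :=
                mul_le_mul_of_nonneg_right hcon (zpow_pos hηpos n).le
            _ = ‖a (j + n)‖ * (η ^ j * η ^ n) := by ring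
        linarith
      calc ‖a n‖⁻¹ * ‖a (j + n)‖ * η ^ j = (‖a (j + n)‖ * η ^ j) * ‖a n‖⁻¹ := by ring
        _ < ‖a n‖ * ‖a n‖⁻¹ :=
            mul_lt_mul_of_pos_right key (by positivity)
        _ = 1 := mul_inv_cancel₀ hanpos.ne'
  -- w tends to zero on the annulus
  have hwten : ∀ η ∈ Set.Ioo α β,
      Tendsto (fun j : ℤ => ‖w j‖ * η ^ j) cofinite (nhds 0) := by
    intro η hη
    have hηpos : 0 < η := hα.trans hη.1
    have hshift : Tendsto (fun j : ℤ => j + n) cofinite cofinite :=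
      (add_left_injective n).tendsto_cofinite
    have h1 : Tendsto (fun j : ℤ => ‖a (j + n)‖ * η ^ (j + n)) cofinite (nhds 0) :=
      (hten η hη).comp hshift
    have h2 := h1.const_mul (‖a n‖⁻¹ * η ^ (-n))
    rw [mul_zero] at h2
    apply squeeze_zero (fun j => by positivity) _ h2
    intro j
    calc ‖w j‖ * η ^ j ≤ ‖d j‖ * η ^ j :=
          mul_le_mul_of_nonneg_right (hwd j) (zpow_pos hηpos j).le
      _ = ‖a n‖⁻¹ * η ^ (-n) * (‖a (j + n)‖ * η ^ (j + n)) := by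
          rw [hdnorm, zpow_add₀ hηpos.ne' j n, zpow_neg]
          have hn0 : (η:ℝ) ^ n ≠ 0 := (zpow_pos hηpos n).ne'
          field_simp
  -- Gauss norms of w, all < 1
  have hM : ∀ η ∈ Set.Ioo α β, ∃ M : ℝ, 0 ≤ M ∧ M < 1 ∧ ∀ j, ‖w j‖ * η ^ j ≤ M := by
    intro η hη
    have hbdd := LU_bddAbove (hwten η hη)
    refine ⟨⨆ j, ‖w j‖ * η ^ j, ?_, ?_, fun j => le_ciSup hbdd j⟩
    · have hηpos : 0 < η := hα.trans hη.1
      exact le_trans (by positivity : (0:ℝ) ≤ ‖w 0‖ * η ^ (0:ℤ)) (le_ciSup hbdd 0)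
    · exact LU_ciSup_lt_one (hwten η hη)
        (fun j => by have := hα.trans hη.1; positivity) (hwnorm η hη)
  -- the geometric series s = sum of convolution powers of w
  set s : ℤ → K := fun i => ∑' k : ℕ, convPow w k i with hs_def
  set μ : ℝ := (α + β) / 2 with hμ_def
  have hμ : μ ∈ Set.Ioo α β := ⟨by rw [hμ_def]; linarith, by rw [hμ_def]; linarith⟩
  have hμpos : 0 < μ := hα.trans hμ.1
  obtain ⟨M₀, hM₀nn, hM₀1, hM₀le⟩ := hM μ hμ
  have hssummable : ∀ i, Summable (fun k => convPow w k i) := by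
    intro i
    apply Summable.of_norm_bounded
      ((summable_geometric_of_lt_one hM₀nn hM₀1).mul_right (μ ^ (-i)))
    intro k
    exact LU_shift hμpos (LU_convPow_le hμpos hM₀nn hM₀le k i)
  -- bounds for s
  have hsle : ∀ η ∈ Set.Ioo α β, ∀ i, ‖s i‖ * η ^ i ≤ 1 := by
    intro η hη i
    have hηpos : 0 < η := hα.trans hη.1
    obtain ⟨M, hMnn, hM1, hMle⟩ := hM η hη
    have hb : ∀ k, ‖convPow w k i‖ ≤ η ^ (-i) := by
      intro k
      have h1 := LU_shift hηpos (LU_convPow_le hηpos hMnn hMle k i)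
      calc ‖convPow w k i‖ ≤ M ^ k * η ^ (-i) := h1
        _ ≤ 1 * η ^ (-i) := mul_le_mul_of_nonneg_right
            (pow_le_one₀ hMnn hM1.le) (zpow_pos hηpos _).le
        _ = η ^ (-i) := one_mul _
    have h := IsUltrametricDist.norm_tsum_le_of_forall_le_of_nonneg
      (zpow_pos hηpos (-i)).le hb
    calc ‖s i‖ * η ^ i ≤ η ^ (-i) * η ^ i :=
          mul_le_mul_of_nonneg_right h (zpow_pos hηpos i).le
      _ = 1 := by rw [← zpow_add₀ hηpos.ne', neg_add_cancel, zpow_zero]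
  -- s converges on the annulus
  have hs_conv : ConvergesOnOpenAnnulus α β s := by
    intro η hη
    have hηpos : 0 < η := hα.trans hη.1
    rw [cocompact_eq_atBot_atTop, tendsto_sup]
    constructor
    · -- atBot : use the smaller radius
      set η₁ : ℝ := (α + η) / 2 with hη₁_def
      have hη₁ : η₁ ∈ Set.Ioo α β :=
        ⟨by rw [hη₁_def]; linarith [hη.1], by rw [hη₁_def]; linarith [hη.1, hη.2]⟩
      have hη₁pos : 0 < η₁ := hα.trans hη₁.1
      have hη₁lt : η₁ < η := by rw [hη₁_def]; linarith [hη.1]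
      have hq : 1 < η / η₁ := (one_lt_div hη₁pos).2 hη₁lt
      apply squeeze_zero (f := fun i : ℤ => ‖s i‖ * η ^ i)
        (g := fun i : ℤ => (η / η₁) ^ i) (fun i => by positivity) _
        (LU_tendsto_zpow_atBot hq)
      intro i
      have h1 : ‖s i‖ ≤ 1 * η₁ ^ (-i) := LU_shift hη₁pos (hsle η₁ hη₁ i)
      rw [one_mul] at h1
      calc ‖s i‖ * η ^ i ≤ η₁ ^ (-i) * η ^ i :=
            mul_le_mul_of_nonneg_right h1 (zpow_pos hηpos i).le
        _ = (η / η₁) ^ i := LU_ratio η₁ η i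
    · -- atTop : use the bigger radius
      set η₂ : ℝ := (η + β) / 2 with hη₂_def
      have hη₂ : η₂ ∈ Set.Ioo α β :=
        ⟨by rw [hη₂_def]; linarith [hη.1, hη.2], by rw [hη₂_def]; linarith [hη.2]⟩
      have hη₂pos : 0 < η₂ := hα.trans hη₂.1
      have hη₂gt : η < η₂ := by rw [hη₂_def]; linarith [hη.2]
      have hq0 : 0 ≤ η / η₂ := by positivity
      have hq : η / η₂ < 1 := (div_lt_one hη₂pos).2 hη₂gt
      apply squeeze_zero (f := fun i : ℤ => ‖s i‖ * η ^ i)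
        (g := fun i : ℤ => (η / η₂) ^ i) (fun i => by positivity) _
        (LU_tendsto_zpow_atTop hq0 hq)
      intro i
      have h1 : ‖s i‖ ≤ 1 * η₂ ^ (-i) := LU_shift hη₂pos (hsle η₂ hη₂ i)
      rw [one_mul] at h1
      calc ‖s i‖ * η ^ i ≤ η₂ ^ (-i) * η ^ i :=
            mul_le_mul_of_nonneg_right h1 (zpow_pos hηpos i).le
        _ = (η / η₂) ^ i := LU_ratio η₂ η i
  -- the key identity : d * s = delta
  have hds : ∀ i, ∑' j : ℤ, d j * s (i - j) = (if i = 0 then (1 : K) else 0) := by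
    intro i
    have hsbound : ∀ i', ‖s i'‖ * μ ^ i' ≤ 1 := hsle μ hμ
    have hsum2 : Summable (fun j => w j * s (i - j)) :=
      LU_summable_conv hμpos (hwten μ hμ) hsbound i
    have hsum1 : Summable (fun j : ℤ => (if j = 0 then (1 : K) else 0) * s (i - j)) := by
      apply summable_of_finite_support
      apply Set.Finite.subset (Set.finite_singleton 0)
      intro j hj
      simp only [Function.mem_support] at hj
      by_contra hj0
      simp only [Set.mem_singleton_iff] at hj0
      exact hj (by simp [hj0])
    have hstep1 : ∑' j : ℤ, d j * s (i - j)
        = (∑' j : ℤ, (if j = 0 then (1 : K) else 0) * s (i - j))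
          - ∑' j : ℤ, w j * s (i - j) := by
      rw [← Summable.tsum_sub hsum1 hsum2]
      apply tsum_congr
      intro j
      rw [hdw j]; ring
    have hstep2 : ∑' j : ℤ, (if j = 0 then (1 : K) else 0) * s (i - j) = s i := by
      rw [tsum_eq_single 0 (fun j hj => by simp [hj])]
      simp
    -- the double sum swap
    have hswap : ∑' j : ℤ, w j * s (i - j) = s i - (if i = 0 then (1 : K) else 0) := by
      have hF2 : ∀ k : ℕ, Summable (fun j : ℤ => w j * convPow w k (i - j)) := by
        intro k
        exact LU_summable_conv hμpos (hwten μ hμ)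
          (fun i' => LU_convPow_le hμpos hM₀nn hM₀le k i') i
      have hF1 : ∀ j : ℤ, Summable (fun k : ℕ => w j * convPow w k (i - j)) :=
        fun j => (hssummable (i - j)).mul_left (w j)
      have hF : Summable (Function.uncurry
          (fun (k : ℕ) (j : ℤ) => w j * convPow w k (i - j))) := by
        apply NonarchimedeanAddGroup.summable_of_tendsto_cofinite_zero
        rw [tendsto_zero_iff_norm_tendsto_zero]
        rw [NormedAddCommGroup.tendsto_nhds_zero]
        intro ε hε
        rw [Filter.eventually_cofinite]
        have hc : (0:ℝ) < ε * μ ^ i := by positivity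
        have hS1 : {j : ℤ | ¬ ‖w j‖ * μ ^ j < ε * μ ^ i}.Finite :=
          Filter.eventually_cofinite.mp ((hwten μ hμ).eventually_lt_const hc)
        have hS2 : {k : ℕ | ¬ M₀ ^ k < ε * μ ^ i}.Finite := by
          apply Filter.eventually_cofinite.mp
          rw [Nat.cofinite_eq_atTop]
          exact (tendsto_pow_atTop_nhds_zero_of_lt_one hM₀nn hM₀1).eventually_lt_const hc
        apply Set.Finite.subset (hS2.prod hS1)
        rintro ⟨k, j⟩ hp
        simp only [Set.mem_setOf_eq, norm_norm, not_lt] at hp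
        have hnF : ‖w j * convPow w k (i - j)‖
            ≤ (‖w j‖ * μ ^ j) * (M₀ ^ k) * μ ^ (-i) := by
          have h1 : ‖w j‖ ≤ (‖w j‖ * μ ^ j) * μ ^ (-j) := by
            rw [mul_assoc, ← zpow_add₀ hμpos.ne', add_neg_cancel, zpow_zero, mul_one]
          have h2 : ‖convPow w k (i - j)‖ ≤ M₀ ^ k * μ ^ (-(i - j)) :=
            LU_shift hμpos (LU_convPow_le hμpos hM₀nn hM₀le k (i - j))
          calc ‖w j * convPow w k (i - j)‖ = ‖w j‖ * ‖convPow w k (i - j)‖ :=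
                norm_mul _ _
            _ ≤ ((‖w j‖ * μ ^ j) * μ ^ (-j)) * (M₀ ^ k * μ ^ (-(i - j))) := by
                apply mul_le_mul h1 h2 (norm_nonneg _) (by positivity)
            _ = (‖w j‖ * μ ^ j) * (M₀ ^ k) * (μ ^ (-j) * μ ^ (-(i - j))) := by ring
            _ = (‖w j‖ * μ ^ j) * (M₀ ^ k) * μ ^ (-i) := by
                rw [← zpow_add₀ hμpos.ne', show -j + -(i - j) = -i by ring]
        have huv : ε * μ ^ i ≤ (‖w j‖ * μ ^ j) * (M₀ ^ k) := by
          have h3 : ε ≤ (‖w j‖ * μ ^ j) * (M₀ ^ k) * μ ^ (-i) := le_trans hp hnF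
          have h4 := mul_le_mul_of_nonneg_right h3 (zpow_pos hμpos i).le
          rwa [mul_assoc _ (μ ^ (-i)) (μ ^ i), ← zpow_add₀ hμpos.ne',
            neg_add_cancel, zpow_zero, mul_one, mul_comm ε (μ ^ i), mul_comm (μ ^ i) ε] at h4
        have hwnn : (0:ℝ) ≤ ‖w j‖ * μ ^ j := by positivity
        have hMk1 : M₀ ^ k ≤ 1 := pow_le_one₀ hM₀nn hM₀1.le
        have hw1 : ‖w j‖ * μ ^ j ≤ 1 := (hM₀le j).trans hM₀1.le
        constructor
        · simp only [Set.mem_setOf_eq, not_lt]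
          calc ε * μ ^ i ≤ (‖w j‖ * μ ^ j) * (M₀ ^ k) := huv
            _ ≤ 1 * (M₀ ^ k) := mul_le_mul_of_nonneg_right hw1 (pow_nonneg hM₀nn k)
            _ = M₀ ^ k := one_mul _
        · simp only [Set.mem_setOf_eq, not_lt]
          calc ε * μ ^ i ≤ (‖w j‖ * μ ^ j) * (M₀ ^ k) := huv
            _ ≤ (‖w j‖ * μ ^ j) * 1 := mul_le_mul_of_nonneg_left hMk1 hwnn
            _ = ‖w j‖ * μ ^ j := mul_one _
      calc ∑' j : ℤ, w j * s (i - j)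
          = ∑' (j : ℤ) (k : ℕ), w j * convPow w k (i - j) := by
            apply tsum_congr; intro j
            exact (tsum_mul_left).symm
        _ = ∑' (k : ℕ) (j : ℤ), w j * convPow w k (i - j) :=
            (Summable.tsum_comm' hF hF2 hF1)
        _ = ∑' k : ℕ, convPow w (k + 1) i := by
            apply tsum_congr; intro k
            rfl
        _ = s i - (if i = 0 then (1 : K) else 0) := by
            have h := Summable.tsum_eq_zero_add (hssummable i)
            have h0 : convPow w 0 i = (if i = 0 then (1 : K) else 0) := rfl
            rw [show s i = ∑' k : ℕ, convPow w k i from rfl, h, h0]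
            ring
    rw [hstep1, hstep2, hswap]
    ring
  -- assemble the inverse
  refine ⟨fun i => (a n)⁻¹ * s (i + n), ?_, ?_⟩
  · intro η hη
    have hηpos : 0 < η := hα.trans hη.1
    rw [cocompact_eq_cofinite]
    have h1 := hs_conv η hη
    rw [cocompact_eq_cofinite] at h1
    have h2 : Tendsto (fun i : ℤ => ‖s (i + n)‖ * η ^ (i + n)) cofinite (nhds 0) :=
      h1.comp ((add_left_injective n).tendsto_cofinite)
    have h3 := h2.const_mul (‖a n‖⁻¹ * η ^ (-n))
    rw [mul_zero] at h3
    refine h3.congr fun i => ?_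
    show (‖a n‖⁻¹ * η ^ (-n)) * (‖s (i + n)‖ * η ^ (i + n)) = ‖(a n)⁻¹ * s (i + n)‖ * η ^ i
    have hsplit : η ^ (i + n) = η ^ i * η ^ n := zpow_add₀ hηpos.ne' i n
    rw [norm_mul, norm_inv, hsplit, zpow_neg]
    have hn0 : (η:ℝ) ^ n ≠ 0 := (zpow_pos hηpos n).ne'
    field_simp
  · funext i
    have hterm : ∀ j : ℤ, a j * ((a n)⁻¹ * s (i - j + n)) = d (j - n) * s (i - (j - n)) := by
      intro j
      rw [hd_def]
      simp only
      rw [show j - n + n = j by ring, show i - (j - n) = i - j + n by ring]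
      ring
    show (∑' j : ℤ, a j * ((a n)⁻¹ * s (i - j + n))) = _
    rw [tsum_congr hterm]
    have hre := (Equiv.addRight n).tsum_eq (fun j : ℤ => d (j - n) * s (i - (j - n)))
    simp only [Equiv.coe_addRight] at hre
    have hre2 : ∑' x : ℤ, d ((x + n) - n) * s (i - ((x + n) - n)) = ∑' x : ℤ, d x * s (i - x) := by
      apply tsum_congr; intro x
      rw [show x + n - n = x by ring]
    rw [← hre, hre2]
    exact hds i
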